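/- Let n ≥ 1 be an integer and λ ∈ ℝ with λ > 0, and set μ := √(n² + λ), a := (n−μ)/2, b := (n+μ)/2, c := n + 1/2. Then Σ_{k=0}^∞ (a)_k (b)_k / (k! (c)_k) = 0 (i.e. the boundary value ψ₁(λ,1) of the hypergeometric solution vanishes) if and only if there exists a nonnegative integer m such that λ = (2m+1)((2m+1) + 2n). In particular, the eigenvalues of the radial closed eigenvalue problem arising from odd (antisymmetric) solutions are exactly λ_{2m+1} = (2m+1)(2m+1+2n), m ≥ 0. -/

import Mathlib

open Set Filter
open scoped Topology Real

set_option maxHeartbeats 1000000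

/-- Pochhammer symbol `(d)_k = d(d+1)⋯(d+k−1)` over the reals. -/
noncomputable def poch (d : ℝ) (k : ℕ) : ℝ := Polynomial.eval d (ascPochhammer ℝ k)

/-- The `k`-th coefficient `(a)_k (b)_k / (k! (c)_k)` of the Gauss hypergeometric series. -/
noncomputable def hypCoeff (a b c : ℝ) (k : ℕ) : ℝ :=
  poch a k * poch b k / ((k.factorial : ℝ) * poch c k)

/-- The Gauss hypergeometric series `F(a,b,c,x) = Σ_k ((a)_k (b)_k / (k! (c)_k)) x^k`. -/
noncomputable def hypF (a b c x : ℝ) : ℝ := ∑' k : ℕ, hypCoeff a b c k * x ^ k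

/-- The first hypergeometric solution
`ψ₁(λ,ρ) = F((n−μ)/2, (n+μ)/2, n + 1/2, ρ²)` with `μ = √(n² + λ)`. -/
noncomputable def psi1 (n : ℕ) (lam ρ : ℝ) : ℝ :=
  hypF (((n : ℝ) - Real.sqrt ((n : ℝ) ^ 2 + lam)) / 2)
    (((n : ℝ) + Real.sqrt ((n : ℝ) ^ 2 + lam)) / 2) ((n : ℝ) + 1 / 2) (ρ ^ 2)

/-- The second hypergeometric solution
`ψ₂(λ,ρ) = ρ^{1−2n} F((1−n−μ)/2, (1−n+μ)/2, 3/2 − n, ρ²)` with `μ = √(n² + λ)`. -/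
noncomputable def psi2 (n : ℕ) (lam ρ : ℝ) : ℝ :=
  hypF ((1 - (n : ℝ) - Real.sqrt ((n : ℝ) ^ 2 + lam)) / 2)
    ((1 - (n : ℝ) + Real.sqrt ((n : ℝ) ^ 2 + lam)) / 2) (3 / 2 - (n : ℝ)) (ρ ^ 2)
    / ρ ^ (2 * n - 1)

/-- The radial equation
`(1−ρ²)·φ''(ρ) + ((2n − (2n+1)ρ²)/ρ)·φ'(ρ) = −λ·φ(ρ)` at the point `ρ`. -/
def RadialEq (n : ℕ) (lam : ℝ) (φ : ℝ → ℝ) (ρ : ℝ) : Prop :=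
  (1 - ρ ^ 2) * deriv (deriv φ) ρ
    + ((2 * (n : ℝ) - (2 * (n : ℝ) + 1) * ρ ^ 2) / ρ) * deriv φ ρ = -lam * φ ρ

lemma poch_zero (d : ℝ) : poch d 0 = 1 := by simp [poch]

lemma poch_succ (d : ℝ) (k : ℕ) : poch d (k+1) = poch d k * (d + k) := by
  simp [poch, ascPochhammer_succ_right]

lemma poch_pos {d : ℝ} (hd : 0 < d) (k : ℕ) : 0 < poch d k := by
  induction k with
  | zero => simp [poch_zero]
  | succ k ih => rw [poch_succ]; positivity

lemma hypCoeff_zero (a b c : ℝ) : hypCoeff a b c 0 = 1 := by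
  simp [hypCoeff, poch_zero]

lemma hypCoeff_succ {c : ℝ} (hc : 0 < c) (a b : ℝ) (k : ℕ) :
    hypCoeff a b c (k+1) = hypCoeff a b c k * ((a+k)*(b+k)/(((k:ℝ)+1)*(c+k))) := by
  have h1 : poch c k ≠ 0 := (poch_pos hc k).ne'
  have h2 : ((k.factorial : ℝ)) ≠ 0 := by positivity
  have h3 : c + k ≠ 0 := by positivity
  have h4 : ((k:ℝ)+1) ≠ 0 := by positivity
  unfold hypCoeff
  rw [poch_succ, poch_succ, poch_succ, Nat.factorial_succ]
  push_cast
  field_simp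

lemma poch_shift (c : ℝ) (k : ℕ) : poch c k * (c + k) = c * poch (c+1) k := by
  induction k with
  | zero => simp [poch_zero]
  | succ k ih =>
    rw [poch_succ, poch_succ]
    push_cast
    linear_combination (c + (k:ℝ) + 1) * ih

lemma hypCoeff_cshift {c : ℝ} (hc : 0 < c) (a b : ℝ) (k : ℕ) :
    hypCoeff a b (c+1) k = hypCoeff a b c k * (c / (c + k)) := by
  have h1 : poch c k ≠ 0 := (poch_pos hc k).ne'
  have h1' : poch (c+1) k ≠ 0 := (poch_pos (by linarith) k).ne'
  have h2 : ((k.factorial : ℝ)) ≠ 0 := by positivity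
  have h3 : c + k ≠ 0 := by positivity
  have := poch_shift c k
  unfold hypCoeff
  field_simp
  linear_combination (poch a k * poch b k) * this

/-- ratio bound: for large k, the term ratio is at most `(k/(k+1))^{5/4}`. -/
lemma hypCoeff_bound (a b c : ℝ) (hc : 0 < c) (hs : a + b + 1/2 ≤ c) :
    ∃ C : ℝ, 0 ≤ C ∧ ∃ K : ℕ, 1 ≤ K ∧
      ∀ k, K ≤ k → |hypCoeff a b c k| ≤ C * (((k:ℝ) ^ ((5:ℝ)/4))⁻¹) := by
  set K : ℕ := ⌈max (max (1 - a) (1 - b)) (4*|a*b| + c + 1)⌉₊ with hK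
  have hK1 : 1 ≤ K := by
    have : (1:ℝ) ≤ 4*|a*b| + c + 1 := by have := abs_nonneg (a*b); linarith
    have h2 : (1:ℝ) ≤ max (max (1 - a) (1 - b)) (4*|a*b| + c + 1) :=
      le_trans this (le_max_right _ _)
    exact_mod_cast Nat.one_le_ceil_iff.mpr (by linarith)
  set w : ℕ → ℝ := fun k => |hypCoeff a b c k| * (k:ℝ) ^ ((5:ℝ)/4) with hw
  have hstep : ∀ k, K ≤ k → w (k+1) ≤ w k := by
    intro k hk
    have hkR : (max (max (1 - a) (1 - b)) (4*|a*b| + c + 1)) ≤ (k:ℝ) :=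
      le_trans (Nat.le_ceil _) (by exact_mod_cast hk)
    have hka : 1 - a ≤ (k:ℝ) := le_trans (le_trans (le_max_left _ _) (le_max_left _ _)) hkR
    have hkb : 1 - b ≤ (k:ℝ) := le_trans (le_trans (le_max_right _ _) (le_max_left _ _)) hkR
    have hkab : 4*|a*b| + c + 1 ≤ (k:ℝ) := le_trans (le_max_right _ _) hkR
    have hk0 : (1:ℝ) ≤ (k:ℝ) := by
      have := abs_nonneg (a*b); linarith
    have hpos1 : 0 < a + k := by linarith
    have hpos2 : 0 < b + k := by linarith
    have hpos3 : 0 < c + k := by linarith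
    have hpos4 : 0 < (k:ℝ) + 1 := by linarith
    -- polynomial inequality
    have hab : a*b ≤ |a*b| := le_abs_self _
    have hpoly : (a+k)*(b+k) ≤ (c+k)*((k:ℝ) - 1/4) := by nlinarith
    -- Bernoulli
    have hbern : ((k:ℝ) - 1/4)/((k:ℝ)+1) ≤ ((k:ℝ)/((k:ℝ)+1)) ^ ((5:ℝ)/4) := by
      have h1 : (-1:ℝ) ≤ -(1/((k:ℝ)+1)) := by
        rw [neg_le_neg_iff]
        rw [div_le_one hpos4]; linarith
      have := one_add_mul_self_le_rpow_one_add h1 (by norm_num : (1:ℝ) ≤ (5:ℝ)/4)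
      have heq : (1:ℝ) + -(1/((k:ℝ)+1)) = (k:ℝ)/((k:ℝ)+1) := by field_simp; ring
      rw [heq] at this
      have heq2 : ((k:ℝ) - 1/4)/((k:ℝ)+1) = 1 + (5:ℝ)/4 * -(1/((k:ℝ)+1)) := by
        field_simp; ring
      rw [heq2]; exact this
    have hratio : (a+k)*(b+k)/(((k:ℝ)+1)*(c+k)) ≤ ((k:ℝ)/((k:ℝ)+1)) ^ ((5:ℝ)/4) := by
      refine le_trans ?_ hbern
      rw [div_le_div_iff₀ (by positivity) hpos4]
      nlinarith
    have habs : |hypCoeff a b c (k+1)| =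
        |hypCoeff a b c k| * ((a+k)*(b+k)/(((k:ℝ)+1)*(c+k))) := by
      rw [hypCoeff_succ hc, abs_mul,
        abs_of_pos (div_pos (mul_pos hpos1 hpos2) (mul_pos hpos4 hpos3))]
    have hkpos : (0:ℝ) < (k:ℝ) := by linarith
    have hsplit : ((k:ℝ)/((k:ℝ)+1)) ^ ((5:ℝ)/4) * ((k:ℝ)+1) ^ ((5:ℝ)/4)
        = (k:ℝ) ^ ((5:ℝ)/4) := by
      rw [← Real.mul_rpow (by positivity) (by positivity)]
      congr 1; field_simp
    have : w (k+1) = |hypCoeff a b c k| * ((a+k)*(b+k)/(((k:ℝ)+1)*(c+k)))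
        * ((k:ℝ)+1) ^ ((5:ℝ)/4) := by
      simp only [hw]
      rw [habs]
      push_cast
      ring
    rw [this, hw]
    calc |hypCoeff a b c k| * ((a+k)*(b+k)/(((k:ℝ)+1)*(c+k))) * ((k:ℝ)+1) ^ ((5:ℝ)/4)
        ≤ |hypCoeff a b c k| * (((k:ℝ)/((k:ℝ)+1)) ^ ((5:ℝ)/4)) * ((k:ℝ)+1) ^ ((5:ℝ)/4) := by
          have h5 : (0:ℝ) ≤ ((k:ℝ)+1) ^ ((5:ℝ)/4) := by positivity
          have h6 : (0:ℝ) ≤ |hypCoeff a b c k| := abs_nonneg _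
          nlinarith [mul_le_mul_of_nonneg_left hratio h6]
      _ = |hypCoeff a b c k| * (k:ℝ) ^ ((5:ℝ)/4) := by rw [mul_assoc, hsplit]
  have hmono : ∀ k, K ≤ k → w k ≤ w K := by
    intro k hk
    induction k, hk using Nat.le_induction with
    | base => exact le_rfl
    | succ m hm ih => exact le_trans (hstep m hm) ih
  have hC0 : 0 ≤ w K := by
    simp only [hw]
    positivity
  refine ⟨w K, hC0, K, hK1, fun k hk => ?_⟩
  have hkpos : (0:ℝ) < (k:ℝ) := by
    have h9 : (1:ℕ) ≤ k := le_trans hK1 hk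
    exact_mod_cast h9
  have h1 : w k ≤ w K := hmono k hk
  have h2 : (0:ℝ) < (k:ℝ) ^ ((5:ℝ)/4) := Real.rpow_pos_of_pos hkpos _
  simp only [hw] at h1
  calc |hypCoeff a b c k|
      = |hypCoeff a b c k| * ((k:ℝ) ^ ((5:ℝ)/4)) * ((k:ℝ) ^ ((5:ℝ)/4))⁻¹ := by
        field_simp
    _ ≤ w K * ((k:ℝ) ^ ((5:ℝ)/4))⁻¹ :=
        mul_le_mul_of_nonneg_right h1 (inv_nonneg.mpr h2.le)

lemma summable_abs_hypCoeff (a b c : ℝ) (hc : 0 < c) (hs : a + b + 1/2 ≤ c) :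
    Summable (fun k => |hypCoeff a b c k|) := by
  obtain ⟨C, hC0, K, hK1, hb⟩ := hypCoeff_bound a b c hc hs
  rw [← summable_nat_add_iff K]
  have hsum : Summable (fun k : ℕ => C * (((k:ℝ) ^ ((5:ℝ)/4))⁻¹)) :=
    (Real.summable_nat_rpow_inv.mpr (by norm_num)).mul_left C
  have hsum2 : Summable (fun k : ℕ => C * ((((k+K:ℕ):ℝ) ^ ((5:ℝ)/4))⁻¹)) := by
    exact_mod_cast (summable_nat_add_iff K).mpr hsum
  refine Summable.of_nonneg_of_le (fun k => abs_nonneg _) (fun k => ?_) hsum2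
  exact hb (k + K) (Nat.le_add_left K k)

lemma summable_hypCoeff (a b c : ℝ) (hc : 0 < c) (hs : a + b + 1/2 ≤ c) :
    Summable (fun k => hypCoeff a b c k) :=
  (summable_abs_hypCoeff a b c hc hs).of_abs

lemma tendsto_mul_hypCoeff (a b c : ℝ) (hc : 0 < c) (hs : a + b + 1/2 ≤ c) :
    Tendsto (fun k : ℕ => (k:ℝ) * hypCoeff a b c k) atTop (𝓝 0) := by
  obtain ⟨C, hC0, K, hK1, hb⟩ := hypCoeff_bound a b c hc hs
  have hg : Tendsto (fun k : ℕ => C * ((k:ℝ) ^ (-(1/4:ℝ)))) atTop (𝓝 (C * 0)) :=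
    Tendsto.const_mul C ((tendsto_rpow_neg_atTop (by norm_num)).comp
      tendsto_natCast_atTop_atTop)
  rw [mul_zero] at hg
  apply squeeze_zero_norm' _ hg
  filter_upwards [eventually_ge_atTop K] with k hk
  have hkpos : (0:ℝ) < (k:ℝ) := by
    have h9 : (1:ℕ) ≤ k := le_trans hK1 hk
    exact_mod_cast h9
  have h1 := hb k hk
  have h2 : (k:ℝ) * (((k:ℝ) ^ ((5:ℝ)/4))⁻¹) = (k:ℝ) ^ (-(1/4:ℝ)) := by
    calc (k:ℝ) * (((k:ℝ) ^ ((5:ℝ)/4))⁻¹)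
        = (k:ℝ) ^ (1:ℝ) * (k:ℝ) ^ (-((5:ℝ)/4)) := by
          rw [Real.rpow_one, ← Real.rpow_neg hkpos.le]
      _ = (k:ℝ) ^ ((1:ℝ) + -((5:ℝ)/4)) := (Real.rpow_add hkpos _ _).symm
      _ = (k:ℝ) ^ (-(1/4:ℝ)) := by norm_num
  calc ‖(k:ℝ) * hypCoeff a b c k‖ = (k:ℝ) * |hypCoeff a b c k| := by
        rw [norm_mul, Real.norm_natCast, Real.norm_eq_abs]
    _ ≤ (k:ℝ) * (C * (((k:ℝ) ^ ((5:ℝ)/4))⁻¹)) :=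
        mul_le_mul_of_nonneg_left h1 hkpos.le
    _ = C * ((k:ℝ) * (((k:ℝ) ^ ((5:ℝ)/4))⁻¹)) := by ring
    _ = C * ((k:ℝ) ^ (-(1/4:ℝ))) := by rw [h2]

lemma key_identity {c : ℝ} (hc : 0 < c) (a b : ℝ) (k : ℕ) :
    c*(c-a-b)*hypCoeff a b c k - (c-a)*(c-b)*hypCoeff a b (c+1) k
      = c*((k:ℝ)*hypCoeff a b c k - ((k:ℝ)+1)*hypCoeff a b c (k+1)) := by
  rw [hypCoeff_succ hc, hypCoeff_cshift hc]
  have h3 : c + (k:ℝ) ≠ 0 := by positivity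
  have h4 : ((k:ℝ)+1) ≠ 0 := by positivity
  field_simp
  ring

lemma sum_relation (a b c : ℝ) (hc : 0 < c) (hs : a + b + 1/2 ≤ c) :
    c*(c-a-b) * (∑' k, hypCoeff a b c k)
      = (c-a)*(c-b) * (∑' k, hypCoeff a b (c+1) k) := by
  have hsum1 := summable_hypCoeff a b c hc hs
  have hsum2 := summable_hypCoeff a b (c+1) (by linarith) (by linarith)
  set g : ℕ → ℝ := fun k => c * ((k:ℝ) * hypCoeff a b c k) with hg
  set f : ℕ → ℝ := fun k =>
    c*(c-a-b)*hypCoeff a b c k - (c-a)*(c-b)*hypCoeff a b (c+1) k with hf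
  have hfs : Summable f := (hsum1.mul_left _).sub (hsum2.mul_left _)
  have hps : ∀ N : ℕ, ∑ k ∈ Finset.range N, f k = -(g N) := by
    intro N
    have h1 : ∀ k ∈ Finset.range N, f k = g k - g (k+1) := by
      intro k _
      simp only [hf, hg]
      rw [key_identity hc a b k]
      push_cast
      ring
    rw [Finset.sum_congr rfl h1, Finset.sum_range_sub']
    simp [hg]
  have h2 : Tendsto (fun N : ℕ => ∑ k ∈ Finset.range N, f k) atTop (𝓝 0) := by
    simp only [hps]
    rw [show (0:ℝ) = -(c * 0) by ring]
    exact ((tendsto_mul_hypCoeff a b c hc hs).const_mul c).neg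
  have h1 : Tendsto (fun N : ℕ => ∑ k ∈ Finset.range N, f k) atTop (𝓝 (∑' k, f k)) :=
    hfs.hasSum.tendsto_sum_nat
  have h0 : (∑' k, f k) = 0 := tendsto_nhds_unique h1 h2
  have h3 : (∑' k, f k) = c*(c-a-b) * (∑' k, hypCoeff a b c k)
      - (c-a)*(c-b) * (∑' k, hypCoeff a b (c+1) k) := by
    rw [hf]
    rw [Summable.tsum_sub (hsum1.mul_left (c*(c-a-b))) (hsum2.mul_left ((c-a)*(c-b)))]
    rw [tsum_mul_left, tsum_mul_left]
  linarith [h3 ▸ h0]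

/-- In the degenerate case `b = c + j`, the sum vanishes. -/
lemma sum_vanish (a b : ℝ) :
    ∀ (j : ℕ) (c : ℝ), 0 < c → a + b + 1/2 ≤ c → b = c + j →
      (∑' k, hypCoeff a b c k) = 0 := by
  intro j
  induction j with
  | zero =>
    intro c hc hs hb
    have hrel := sum_relation a b c hc hs
    have hb' : b = c := by simpa using hb
    subst hb'
    rw [sub_self, mul_zero, zero_mul] at hrel
    have h1 : b * (b - a - b) ≠ 0 := by
      have h2 : 0 < b - a - b := by linarith
      positivity
    exact (mul_eq_zero.mp hrel).resolve_left h1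
  | succ j ih =>
    intro c hc hs hb
    have h2 : (∑' k, hypCoeff a b (c+1) k) = 0 := by
      apply ih (c+1) (by linarith) (by linarith)
      push_cast at hb ⊢
      linarith
    have hrel := sum_relation a b c hc hs
    rw [h2, mul_zero] at hrel
    have h1 : c * (c - a - b) ≠ 0 := by
      have : 0 < c - a - b := by linarith
      positivity
    exact (mul_eq_zero.mp hrel).resolve_left h1

lemma poch_ratio {c J : ℝ} (hc : 0 < c) (hJ : 0 ≤ J) :
    ∀ k : ℕ, 1 ≤ k → (c+J) * poch c k ≤ c * poch (c+J) k := by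
  intro k hk
  induction k, hk using Nat.le_induction with
  | base =>
    rw [show (1:ℕ) = 0 + 1 from rfl, poch_succ, poch_succ]
    simp [poch]
    ring_nf
    exact le_rfl
  | succ m hm ih =>
    rw [poch_succ, poch_succ]
    have h1 : 0 < c + (m:ℝ) := by positivity
    have h2 : c + (m:ℝ) ≤ c + J + m := by linarith
    have h3 : 0 < poch (c+J) m := poch_pos (by linarith) m
    calc (c+J) * (poch c m * (c + m)) = ((c+J) * poch c m) * (c + m) := by ring
      _ ≤ (c * poch (c+J) m) * (c + m) := mul_le_mul_of_nonneg_right ih h1.le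
      _ ≤ (c * poch (c+J) m) * (c + J + m) := by
          have : 0 ≤ c * poch (c+J) m := by positivity
          exact mul_le_mul_of_nonneg_left h2 this
      _ = c * (poch (c+J) m * (c + J + m)) := by ring

lemma abs_hypCoeff_cJ_le {a b c J : ℝ} (hc : 0 < c) (hb : 0 < b) (hJ : 0 ≤ J)
    (k : ℕ) (hk : 1 ≤ k) :
    |hypCoeff a b (c+J) k| ≤ (c/(c+J)) * |hypCoeff a b c k| := by
  have hpc : 0 < poch c k := poch_pos hc k
  have hpcJ : 0 < poch (c+J) k := poch_pos (by linarith) k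
  have hpb : 0 < poch b k := poch_pos hb k
  have hfk : (0:ℝ) < k.factorial := by positivity
  have hr := poch_ratio hc hJ k hk
  have h1 : |hypCoeff a b (c+J) k| = |poch a k| * poch b k / (k.factorial * poch (c+J) k) := by
    unfold hypCoeff
    rw [abs_div, abs_mul, abs_of_pos hpb, abs_of_pos (by positivity : (0:ℝ) < (k.factorial:ℝ) * poch (c+J) k)]
  have h2 : |hypCoeff a b c k| = |poch a k| * poch b k / (k.factorial * poch c k) := by
    unfold hypCoeff
    rw [abs_div, abs_mul, abs_of_pos hpb, abs_of_pos (by positivity : (0:ℝ) < (k.factorial:ℝ) * poch c k)]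
  rw [h1, h2, div_mul_div_comm]
  rw [div_le_div_iff₀ (by positivity) (by positivity)]
  have h5 : (0:ℝ) ≤ |poch a k| * poch b k * (k.factorial:ℝ) := by positivity
  have h6 := mul_le_mul_of_nonneg_left hr h5
  nlinarith [h6]

/-- For some large shift `J`, the sum is nonzero (close to 1). -/
lemma exists_shift_nonzero (a b c : ℝ) (hc : 0 < c) (hb : 0 < b)
    (hs : a + b + 1/2 ≤ c) :
    ∃ J : ℕ, (∑' k, hypCoeff a b (c + (J:ℝ)) k) ≠ 0 := by
  set M : ℝ := ∑' k : ℕ, |hypCoeff a b c (k+1)| with hM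
  have hMsum : Summable (fun k : ℕ => |hypCoeff a b c (k+1)|) := by
    have := summable_abs_hypCoeff a b c hc hs
    exact (summable_nat_add_iff (f := fun n => |hypCoeff a b c n|) 1).mpr this
  have hM0 : 0 ≤ M := tsum_nonneg (fun k => abs_nonneg _)
  obtain ⟨J, hJ⟩ := exists_nat_gt (c * M)
  refine ⟨J, ?_⟩
  set c' : ℝ := c + (J:ℝ) with hc'
  have hJ0 : (0:ℝ) ≤ (J:ℝ) := Nat.cast_nonneg J
  have hc'pos : 0 < c' := by rw [hc']; linarith
  have hs' : a + b + 1/2 ≤ c' := by rw [hc']; linarith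
  have hsum' := summable_hypCoeff a b c' hc'pos hs'
  have hsum'shift : Summable (fun k : ℕ => hypCoeff a b c' (k+1)) :=
    (summable_nat_add_iff (f := fun n => hypCoeff a b c' n) 1).mpr hsum'
  have habs'shift : Summable (fun k : ℕ => |hypCoeff a b c' (k+1)|) :=
    (summable_nat_add_iff (f := fun n => |hypCoeff a b c' n|) 1).mpr (summable_abs_hypCoeff a b c' hc'pos hs')
  have hsplit : (∑' k, hypCoeff a b c' k)
      = 1 + ∑' k : ℕ, hypCoeff a b c' (k+1) := by
    rw [Summable.tsum_eq_zero_add hsum', hypCoeff_zero]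
  have hbound : |∑' k : ℕ, hypCoeff a b c' (k+1)| ≤ (c/c') * M := by
    calc |∑' k : ℕ, hypCoeff a b c' (k+1)|
        ≤ ∑' k : ℕ, |hypCoeff a b c' (k+1)| := by
          have hn : Summable fun k : ℕ => ‖hypCoeff a b c' (k+1)‖ := by
            simpa [Real.norm_eq_abs] using habs'shift
          simpa [Real.norm_eq_abs] using norm_tsum_le_tsum_norm hn
      _ ≤ ∑' k : ℕ, (c/c') * |hypCoeff a b c (k+1)| := by
          apply Summable.tsum_le_tsum _ habs'shift (hMsum.mul_left _)
          intro k
          exact abs_hypCoeff_cJ_le hc hb hJ0 (k+1) (Nat.le_add_left 1 k)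
      _ = (c/c') * M := by rw [tsum_mul_left]
  have hlt : (c/c') * M < 1 := by
    rw [div_mul_eq_mul_div, div_lt_one hc'pos]
    rw [hc']
    linarith
  intro hzero
  rw [hzero] at hsplit
  have : |∑' k : ℕ, hypCoeff a b c' (k+1)| = 1 := by
    rw [show (∑' k : ℕ, hypCoeff a b c' (k+1)) = -1 by linarith]
    simp
  linarith [hbound, hlt, this]

/-- Descending chain: nonvanishing propagates down. -/
lemma sum_nonzero (a b : ℝ) (hb : 0 < b) :
    ∀ (J : ℕ) (c : ℝ), 0 < c → a + b + 1/2 ≤ c → (∀ i : ℕ, b ≠ c + i) →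
      (∑' k, hypCoeff a b (c + (J:ℝ)) k) ≠ 0 → (∑' k, hypCoeff a b c k) ≠ 0 := by
  intro J
  induction J with
  | zero =>
    intro c _ _ _ h
    simpa using h
  | succ J ih =>
    intro c hc hs hne h
    have hstep : (∑' k, hypCoeff a b (c+1) k) ≠ 0 := by
      apply ih (c+1) (by linarith) (by linarith)
      · intro i
        have := hne (i+1)
        push_cast at this ⊢
        intro hcon
        exact this (by linarith)
      · have : c + 1 + (J:ℝ) = c + ((J:ℕ)+1 : ℕ) := by push_cast; ring
        rw [this]
        exact h
    have hrel := sum_relation a b c hc hs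
    intro hzero
    rw [hzero, mul_zero] at hrel
    have h1 : c - a ≠ 0 := by
      have : a < c := by linarith
      intro hcon; linarith
    have h2 : c - b ≠ 0 := by
      have := hne 0
      push_cast at this
      intro hcon
      exact this (by linarith)
    have := mul_eq_zero.mp hrel.symm
    rcases this with h | h
    · rcases mul_eq_zero.mp h with h' | h'
      · exact h1 h'
      · exact h2 h'
    · exact hstep h

/-- the value of the hypergeometric series at `1` (i.e. `ψ₁(λ,1)`)
vanishes iff `λ = (2m+1)((2m+1)+2n)` for some nonnegative integer `m`. -/
theorem hyp_series_at_one_eq_zero_iff (n : ℕ) (hn : 1 ≤ n) (lam : ℝ)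
    (hlam : 0 < lam) :
    (∑' k : ℕ,
        hypCoeff (((n : ℝ) - Real.sqrt ((n : ℝ) ^ 2 + lam)) / 2)
          (((n : ℝ) + Real.sqrt ((n : ℝ) ^ 2 + lam)) / 2) ((n : ℝ) + 1 / 2) k) = 0 ↔
      ∃ m : ℕ, lam = (2 * (m : ℝ) + 1) * ((2 * (m : ℝ) + 1) + 2 * (n : ℝ)) := by
  set μ : ℝ := Real.sqrt ((n : ℝ) ^ 2 + lam) with hμ
  set a : ℝ := ((n : ℝ) - μ) / 2 with ha
  set b : ℝ := ((n : ℝ) + μ) / 2 with hbdef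
  set c : ℝ := (n : ℝ) + 1 / 2 with hcdef
  have hn0 : (0:ℝ) ≤ (n:ℝ) := Nat.cast_nonneg n
  have hnn : (0:ℝ) < (n:ℝ) ^ 2 + lam := by positivity
  have hμpos : 0 < μ := Real.sqrt_pos.mpr hnn
  have hμsq : μ ^ 2 = (n:ℝ) ^ 2 + lam := Real.sq_sqrt hnn.le
  have hb : 0 < b := by rw [hbdef]; positivity
  have hc : 0 < c := by rw [hcdef]; positivity
  have hs : a + b + 1/2 ≤ c := by rw [ha, hbdef, hcdef]; ring_nf; exact le_rfl
  constructor
  · intro h0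
    by_contra hno
    push_neg at hno
    have hne : ∀ i : ℕ, b ≠ c + i := by
      intro i hcon
      apply hno i
      have hμi : μ = (n:ℝ) + 2*i + 1 := by
        rw [hbdef, hcdef] at hcon
        linarith
      nlinarith [hμsq, hμi]
    obtain ⟨J, hJ⟩ := exists_shift_nonzero a b c hc hb hs
    exact sum_nonzero a b hb J c hc hs hne hJ h0
  · rintro ⟨m, hm⟩
    have hsq : (n:ℝ) ^ 2 + lam = ((n:ℝ) + 2*m + 1) ^ 2 := by rw [hm]; ring
    have hμm : μ = (n:ℝ) + 2*m + 1 := by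
      rw [hμ, hsq, Real.sqrt_sq (by positivity)]
    have hbc : b = c + m := by
      rw [hbdef, hcdef, hμm]; ring
    exact sum_vanish a b m c hc hs hbc
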